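/- arXiv:2111.00461 — 3 statements merged into one kernel-verified Lean document; each statement's English description precedes it below -/
import Mathlib

section
/- Let X be a metric space, Y a real Banach space, C ⊆ Y a closed convex cone, f : X → Y a mapping, and R ⊆ X a nonempty closed set. Define ν : R → [0,+∞] by ν(x) = exc(f(R) − f(x), C) = exc(f(R), f(x) + C). If f is C-lower semicontinuous at a point x̄ ∈ R, then ν is lower semicontinuous at x̄ (with respect to the topology induced on R), i.e. for every sequence (xₙ) in R converging to x̄ one has liminf_{n→∞} ν(xₙ) ≥ ν(x̄). -/
open Set Metric Filter Topology Pointwise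
open scoped ENNReal NNReal

noncomputable section

/-- The excess of `A` over `B`: `exc A B = sup_{a ∈ A} dist (a, B)`,
computed in `ℝ≥0∞` so that the convention `dist (y, ∅) = +∞` holds. -/
def exc {Y : Type*} [PseudoEMetricSpace Y] (A B : Set Y) : ℝ≥0∞ :=
  ⨆ a ∈ A, EMetric.infEdist a B

/-- Translating by an element of the cone does not increase the `infEdist` to the cone. -/
lemma infEdist_add_mem_le {Y : Type*} [NormedAddCommGroup Y] [NormedSpace ℝ Y]
    (C : Set Y) (hCconv : Convex ℝ C)
    (hCcone : ∀ c ∈ C, ∀ t : ℝ, 0 ≤ t → t • c ∈ C)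
    {c : Y} (hc : c ∈ C) (w : Y) :
    EMetric.infEdist (w + c) C ≤ EMetric.infEdist w C := by
  have hCC : ∀ y ∈ C, y + c ∈ C := by
    intro y hy
    have hmid : (1/2 : ℝ) • y + (1/2 : ℝ) • c ∈ C :=
      hCconv hy hc (by norm_num) (by norm_num) (by norm_num)
    have := hCcone _ hmid 2 (by norm_num)
    have h2 : (2 : ℝ) • ((1/2 : ℝ) • y + (1/2 : ℝ) • c) = y + c := by
      rw [smul_add, smul_smul, smul_smul]
      norm_num
    rwa [h2] at this
  calc EMetric.infEdist (w + c) C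
      ≤ EMetric.infEdist (w + c) ((fun y => y + c) '' C) :=
        EMetric.infEdist_anti (by rintro _ ⟨y, hy, rfl⟩; exact hCC y hy)
    _ = EMetric.infEdist w C := by
        simp only [EMetric.infEdist, Metric.infEDist, iInf_image]
        exact iInf_congr fun y => iInf_congr fun _ => edist_add_right w y c

/-- if `f` is `C`-lower semicontinuous at `xb ∈ R`, then
`ν(x) = exc (f(R) − f(x), C)` is lower semicontinuous at `xb` relative to `R`:
for every sequence `(xₙ)` in `R` converging to `xb`, `liminf ν(xₙ) ≥ ν(xb)`. -/
theorem nu_lsc_of_Clsc {X Y : Type*} [MetricSpace X]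
    [NormedAddCommGroup Y] [NormedSpace ℝ Y] [CompleteSpace Y]
    (C : Set Y) (hCclosed : IsClosed C) (hCconv : Convex ℝ C)
    (hCcone : ∀ c ∈ C, ∀ t : ℝ, 0 ≤ t → t • c ∈ C)
    (f : X → Y) (R : Set X) (hRne : R.Nonempty) (hRcl : IsClosed R)
    (xb : X) (hxb : xb ∈ R)
    (hClsc : ∀ ε > (0 : ℝ), ∃ δ > (0 : ℝ), ∀ x ∈ Metric.closedBall xb δ,
      f x ∈ Metric.closedBall (f xb) ε + C) :
    ∀ u : ℕ → X, (∀ n, u n ∈ R) → Tendsto u atTop (𝓝 xb) →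
      exc ((fun z => f z - f xb) '' R) C ≤
        Filter.liminf (fun n => exc ((fun z => f z - f (u n)) '' R) C) atTop := by
  intro u hu hconv
  set L := Filter.liminf (fun n => exc ((fun z => f z - f (u n)) '' R) C) atTop
  refine ENNReal.le_of_forall_pos_le_add fun ε hε _ => ?_
  obtain ⟨δ, hδ, hδball⟩ := hClsc ε (by exact_mod_cast hε)
  -- eventually `u n ∈ closedBall xb δ`
  have hev : ∀ᶠ n in atTop, u n ∈ Metric.closedBall xb δ := by
    have := Metric.tendsto_nhds.mp hconv δ hδ
    filter_upwards [this] with n hn using (Metric.mem_closedBall.mpr hn.le)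
  -- key pointwise estimate
  have key : ∀ᶠ n in atTop,
      exc ((fun z => f z - f xb) '' R) C - (ε : ℝ≥0∞) ≤
        exc ((fun z => f z - f (u n)) '' R) C := by
    filter_upwards [hev] with n hn
    rw [tsub_le_iff_right]
    refine iSup₂_le ?_
    rintro _ ⟨z, hz, rfl⟩
    obtain ⟨b, hb, c, hc, hbc⟩ := hδball (u n) hn
    have hdecomp : f z - f xb = (f z - f (u n) + c) + (b - f xb) := by
      simp only at hbc; rw [← hbc]; abel
    have h1 : EMetric.infEdist (f z - f xb) C ≤
        EMetric.infEdist (f z - f (u n) + c) C + (‖b - f xb‖₊ : ℝ≥0∞) := by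
      rw [hdecomp]
      calc EMetric.infEdist ((f z - f (u n) + c) + (b - f xb)) C ≤
          EMetric.infEdist (f z - f (u n) + c) C +
            edist ((f z - f (u n) + c) + (b - f xb)) (f z - f (u n) + c) :=
          EMetric.infEdist_le_infEdist_add_edist
        _ = EMetric.infEdist (f z - f (u n) + c) C + (‖b - f xb‖₊ : ℝ≥0∞) := by
          rw [edist_eq_enorm_sub, add_sub_cancel_left, enorm_eq_nnnorm]
    have h2 : EMetric.infEdist (f z - f (u n) + c) C ≤
        EMetric.infEdist (f z - f (u n)) C :=
      infEdist_add_mem_le C hCconv hCcone hc _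
    have h3 : EMetric.infEdist (f z - f (u n)) C ≤
        exc ((fun z => f z - f (u n)) '' R) C :=
      le_iSup₂_of_le (f z - f (u n)) ⟨z, hz, rfl⟩ le_rfl
    have h4 : (‖b - f xb‖₊ : ℝ≥0∞) ≤ (ε : ℝ≥0∞) := by
      have h : ‖b - f xb‖₊ ≤ ε := by
        rw [← NNReal.coe_le_coe, coe_nnnorm, ← dist_eq_norm]
        exact Metric.mem_closedBall.mp hb
      exact_mod_cast h
    calc EMetric.infEdist (f z - f xb) C
        ≤ EMetric.infEdist (f z - f (u n) + c) C + (‖b - f xb‖₊ : ℝ≥0∞) := h1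
      _ ≤ exc ((fun z => f z - f (u n)) '' R) C + (ε : ℝ≥0∞) :=
          add_le_add (h2.trans h3) h4
  have := le_liminf_of_le (by isBoundedDefault) key
  rwa [tsub_le_iff_right] at this

end
end

section
/- Let X be a metric space and let φ, ψ : X → ℝ ∪ {±∞} with x₀ ∈ dom φ ∩ dom ψ. If x₀ is not a local minimizer of φ, ψ is calm at x₀, and c_ψ > clm ψ(x₀), then the strong slope of φ + ψ at x₀ satisfies |∇(φ+ψ)|(x₀) ≥ max{ |∇φ|(x₀) − c_ψ, 0 }. -/
open Set Metric Filter Topology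
open scoped ENNReal NNReal Classical

noncomputable section

/-- The strong slope of an extended-real-valued function `φ` at `x₀`:
`0` if `x₀` is a local minimizer of `φ`, and
`limsup_{x→x₀} (φ(x₀) − φ(x))/d(x,x₀)` otherwise. -/
def stslope {X : Type*} [MetricSpace X] (φ : X → EReal) (x₀ : X) : EReal :=
  if IsLocalMin φ x₀ then 0
  else Filter.limsup (fun x => (φ x₀ - φ x) / ((dist x x₀ : ℝ) : EReal)) (𝓝[≠] x₀)

/-- `ψ` is calm at `x₀` with constant `ℓ` on the ball of radius `δ`:
`|ψ(x) − ψ(x₀)| ≤ ℓ d(x, x₀)` there (formulated by the two one-sided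
inequalities so as to make sense for extended-real values). -/
def CalmWithE {X : Type*} [MetricSpace X] (ψ : X → EReal) (x₀ : X) (ℓ δ : ℝ) : Prop :=
  ∀ x ∈ Metric.closedBall x₀ δ,
    ψ x - ψ x₀ ≤ ((ℓ * dist x x₀ : ℝ) : EReal) ∧
    ψ x₀ - ψ x ≤ ((ℓ * dist x x₀ : ℝ) : EReal)

/-- The modulus of calmness `clm ψ (x₀)`. -/
def clmE {X : Type*} [MetricSpace X] (ψ : X → EReal) (x₀ : X) : ℝ :=
  sInf {ℓ : ℝ | 0 < ℓ ∧ ∃ δ > (0 : ℝ), CalmWithE ψ x₀ ℓ δ}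

/-- calm perturbation of the slope: if `x₀ ∈ dom φ ∩ dom ψ` is not a
local minimizer of `φ`, `ψ` is calm at `x₀` and `c_ψ > clm ψ (x₀)`, then
`|∇(φ+ψ)|(x₀) ≥ max (|∇φ|(x₀) − c_ψ) 0`. -/
theorem stslope_add_calm {X : Type*} [MetricSpace X]
    (φ ψ : X → EReal) (x₀ : X)
    (hφtop : φ x₀ ≠ ⊤) (hφbot : φ x₀ ≠ ⊥)
    (hψtop : ψ x₀ ≠ ⊤) (hψbot : ψ x₀ ≠ ⊥)
    (hmin : ¬ IsLocalMin φ x₀)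
    (hcalm : ∃ ℓ > (0 : ℝ), ∃ δ > (0 : ℝ), CalmWithE ψ x₀ ℓ δ)
    (cψ : ℝ) (hc : clmE ψ x₀ < cψ) :
    max (stslope φ x₀ - (cψ : EReal)) 0 ≤ stslope (fun x => φ x + ψ x) x₀ := by
  classical
  -- extract a calmness constant ℓ < cψ
  obtain ⟨ℓ₀, hℓ₀, hrest⟩ := hcalm
  have hne : {ℓ : ℝ | 0 < ℓ ∧ ∃ δ > (0 : ℝ), CalmWithE ψ x₀ ℓ δ}.Nonempty := ⟨ℓ₀, hℓ₀, hrest⟩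
  obtain ⟨ℓ, ⟨hℓpos, δ, hδ, hcal⟩, hℓc⟩ := exists_lt_of_csInf_lt hne hc
  -- real values at x₀
  obtain ⟨a₀, ha₀⟩ : ∃ r : ℝ, φ x₀ = (r : EReal) :=
    ⟨(φ x₀).toReal, (EReal.coe_toReal hφtop hφbot).symm⟩
  obtain ⟨b₀, hb₀⟩ : ∃ r : ℝ, ψ x₀ = (r : EReal) :=
    ⟨(ψ x₀).toReal, (EReal.coe_toReal hψtop hψbot).symm⟩
  haveI hNB : (𝓝[≠] x₀).NeBot := by
    refine Filter.neBot_iff.2 fun h => hmin ?_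
    have : ∀ᶠ x in 𝓝 x₀, φ x₀ ≤ φ x := by
      rw [← nhdsNE_sup_pure, eventually_sup]
      exact ⟨h ▸ Filter.eventually_bot, Filter.eventually_pure.2 le_rfl⟩
    exact this
  set f : X → EReal := fun x => (φ x₀ - φ x) / ((dist x x₀ : ℝ) : EReal) with hf
  set g : X → EReal := fun x => ((φ x₀ + ψ x₀) - (φ x + ψ x)) / ((dist x x₀ : ℝ) : EReal) with hg
  -- on the punctured ball, ψ is real-valued and close to b₀
  have hψreal : ∀ x, x ∈ Metric.closedBall x₀ δ → x ≠ x₀ →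
      ∃ b : ℝ, ψ x = (b : EReal) ∧ |b - b₀| ≤ ℓ * dist x x₀ := by
    intro x hx hxne
    obtain ⟨h1, h2⟩ := hcal x hx
    rcases eq_top_or_lt_top (ψ x) with hT | hT
    · rw [hT, hb₀, EReal.top_sub_coe] at h1
      exact absurd h1 (EReal.coe_lt_top _).not_ge
    rcases eq_bot_or_bot_lt (ψ x) with hB | hB
    · rw [hB, hb₀, EReal.coe_sub_bot] at h2
      exact absurd h2 (EReal.coe_lt_top _).not_ge
    obtain ⟨b, hb⟩ : ∃ r : ℝ, ψ x = (r : EReal) :=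
      ⟨(ψ x).toReal, (EReal.coe_toReal hT.ne hB.ne').symm⟩
    refine ⟨b, hb, abs_le.2 ⟨?_, ?_⟩⟩
    · rw [hb, hb₀, ← EReal.coe_sub, EReal.coe_le_coe_iff] at h2
      linarith
    · rw [hb, hb₀, ← EReal.coe_sub, EReal.coe_le_coe_iff] at h1
      linarith
  have hball : ∀ᶠ x in 𝓝[≠] x₀, x ∈ Metric.closedBall x₀ δ :=
    Filter.Eventually.filter_mono nhdsWithin_le_nhds (Metric.closedBall_mem_nhds x₀ hδ)
  have hneq : ∀ᶠ x in 𝓝[≠] x₀, x ≠ x₀ := eventually_mem_nhdsWithin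
  by_cases hmin2 : IsLocalMin (fun x => φ x + ψ x) x₀
  · -- case: x₀ is a local min of φ+ψ; then the slope of φ is ≤ cψ
    simp only [stslope]
    rw [if_pos hmin2, if_neg hmin]
    have hloc : ∀ᶠ x in 𝓝[≠] x₀, φ x₀ + ψ x₀ ≤ φ x + ψ x :=
      Filter.Eventually.filter_mono nhdsWithin_le_nhds hmin2
    have hev : ∀ᶠ x in 𝓝[≠] x₀, f x ≤ (cψ : EReal) := by
      filter_upwards [hball, hneq, hloc] with x hx hxne hlx
      have hd : (0 : ℝ) < dist x x₀ := dist_pos.2 hxne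
      obtain ⟨b, hb, hbd⟩ := hψreal x hx hxne
      by_cases hT : φ x = ⊤
      · simp only [hf, hT, EReal.sub_top]
        rw [EReal.bot_div_of_pos_ne_top (by exact_mod_cast hd) (EReal.coe_ne_top _)]
        exact bot_le
      by_cases hB : φ x = ⊥
      · rw [hB, EReal.bot_add, ha₀, hb₀, ← EReal.coe_add, le_bot_iff] at hlx
        exact absurd hlx (EReal.coe_ne_bot _)
      obtain ⟨a, ha⟩ : ∃ r : ℝ, φ x = (r : EReal) :=
        ⟨(φ x).toReal, (EReal.coe_toReal hT hB).symm⟩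
      rw [ha, hb, ha₀, hb₀, ← EReal.coe_add, ← EReal.coe_add, EReal.coe_le_coe_iff] at hlx
      simp only [hf, ha, ha₀, ← EReal.coe_sub, ← EReal.coe_div, EReal.coe_le_coe_iff]
      rw [div_le_iff₀ hd]
      have h1 : b - b₀ ≤ ℓ * dist x x₀ := (abs_le.1 hbd).2
      nlinarith
    refine max_le ?_ le_rfl
    refine EReal.sub_le_of_le_add (b := 0) ?_
    rw [zero_add]
    exact limsup_le_of_le (by isBoundedDefault) hev
  · -- case: x₀ is not a local min of φ+ψ
    simp only [stslope]
    rw [if_neg hmin2, if_neg hmin]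
    have hkey : ∀ᶠ x in 𝓝[≠] x₀, f x ≤ g x + (cψ : EReal) := by
      filter_upwards [hball, hneq] with x hx hxne
      have hd : (0 : ℝ) < dist x x₀ := dist_pos.2 hxne
      obtain ⟨b, hb, hbd⟩ := hψreal x hx hxne
      by_cases hT : φ x = ⊤
      · simp only [hf, hT, EReal.sub_top]
        rw [EReal.bot_div_of_pos_ne_top (by exact_mod_cast hd) (EReal.coe_ne_top _)]
        exact bot_le
      by_cases hB : φ x = ⊥
      · simp only [hg, hB, EReal.bot_add, ha₀, hb₀, ← EReal.coe_add]
        rw [EReal.coe_sub_bot, EReal.top_div_of_pos_ne_top (by exact_mod_cast hd)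
          (EReal.coe_ne_top _), EReal.top_add_of_ne_bot (EReal.coe_ne_bot _)]
        exact le_top
      obtain ⟨a, ha⟩ : ∃ r : ℝ, φ x = (r : EReal) :=
        ⟨(φ x).toReal, (EReal.coe_toReal hT hB).symm⟩
      simp only [hf, hg, ha, hb, ha₀, hb₀, ← EReal.coe_add, ← EReal.coe_sub, ← EReal.coe_div,
        EReal.coe_le_coe_iff]
      have h1 : b₀ - b ≤ ℓ * dist x x₀ := by
        have := (abs_le.1 hbd).1; linarith
      have h2 : (a₀ - a) / dist x x₀ - ((a₀ + b₀) - (a + b)) / dist x x₀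
          = (b - b₀) / dist x x₀ := by ring
      have h3 : (b - b₀) / dist x x₀ ≤ cψ := by
        rw [div_le_iff₀ hd]
        nlinarith [(abs_le.1 hbd).2]
      linarith
    have h1 : limsup f (𝓝[≠] x₀) ≤ limsup (fun x => g x + (cψ : EReal)) (𝓝[≠] x₀) :=
      limsup_le_limsup hkey
    have h2 : limsup (fun x => g x + (cψ : EReal)) (𝓝[≠] x₀)
        ≤ limsup g (𝓝[≠] x₀) + (cψ : EReal) := by
      have := EReal.limsup_add_le (u := g) (v := fun _ => (cψ : EReal)) (f := 𝓝[≠] x₀)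
        (Or.inr (by rw [limsup_const]; exact EReal.coe_ne_top _))
        (Or.inr (by rw [limsup_const]; exact EReal.coe_ne_bot _))
      rwa [limsup_const] at this
    have hA : limsup f (𝓝[≠] x₀) - (cψ : EReal) ≤ limsup g (𝓝[≠] x₀) :=
      EReal.sub_le_of_le_add (h1.trans h2)
    have hB : (0 : EReal) ≤ limsup g (𝓝[≠] x₀) := by
      by_contra hneg
      push_neg at hneg
      have hev : ∀ᶠ x in 𝓝[≠] x₀, g x < 0 := eventually_lt_of_limsup_lt hneg
      apply hmin2
      have : ∀ᶠ x in 𝓝[≠] x₀, φ x₀ + ψ x₀ ≤ φ x + ψ x := by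
        filter_upwards [hev, hneq] with x hgx hxne
        have hd : (0 : ℝ) < dist x x₀ := dist_pos.2 hxne
        by_contra hlt
        push_neg at hlt
        have hnum : (0 : EReal) ≤ (φ x₀ + ψ x₀) - (φ x + ψ x) := by
          by_cases hB' : φ x + ψ x = ⊥
          · rw [hB', ha₀, hb₀, ← EReal.coe_add, EReal.coe_sub_bot]; exact le_top
          by_cases hT' : φ x + ψ x = ⊤
          · rw [hT', ha₀, hb₀] at hlt
            exact absurd hlt (not_lt.2 le_top)
          obtain ⟨c, hcc⟩ : ∃ r : ℝ, φ x + ψ x = (r : EReal) :=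
            ⟨(φ x + ψ x).toReal, (EReal.coe_toReal hT' hB').symm⟩
          rw [hcc, ha₀, hb₀, ← EReal.coe_add, ← EReal.coe_sub]
          rw [hcc, ha₀, hb₀, ← EReal.coe_add, EReal.coe_lt_coe_iff] at hlt
          exact_mod_cast (sub_nonneg.2 hlt.le)
        have : (0 : EReal) ≤ g x :=
          EReal.div_nonneg hnum (by exact_mod_cast hd.le)
        exact absurd (this.trans_lt hgx) (lt_irrefl 0)
      show ∀ᶠ y in 𝓝 x₀, φ x₀ + ψ x₀ ≤ φ y + ψ y
      rw [← nhdsNE_sup_pure, eventually_sup]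
      exact ⟨this, Filter.eventually_pure.2 le_rfl⟩
    exact max_le hA hB


end
end

section
/- Let P be a metric space, X and Y real Banach spaces, C ⊆ Y a closed convex cone, F : P × X ⇒ Y a set-valued mapping with nonempty values, and R : P ⇒ X a set-valued mapping with nonempty values. Define ν₁(p,x) = exc(F(p,x), C) + dist(x, R(p)). Let p̄ ∈ P and x̄ ∈ X be such that ν₁(p̄,x̄) = 0 (i.e. x̄ ∈ R(p̄) and F(p̄,x̄) ⊆ C, using closedness). If F(·,x̄) : P ⇒ Y is Lipschitz upper semicontinuous at p̄ and R is Lipschitz lower semicontinuous at (p̄,x̄), then the function p ↦ ν₁(p,x̄) is calm from above at p̄, with calmness-from-above modulus at most Lipusc F(·,x̄)(p̄) + Liplsc R(p̄,x̄). -/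
open Set Metric Filter Topology Pointwise
open scoped ENNReal NNReal

noncomputable section

/-- `Φ` is Lipschitz upper semicontinuous at `pb` with constant `ℓ` on `B(pb, δ)`. -/
def LipUscWith {P Y : Type*} [MetricSpace P] [PseudoEMetricSpace Y]
    (Φ : P → Set Y) (pb : P) (ℓ δ : ℝ) : Prop :=
  ∀ p ∈ Metric.closedBall pb δ, exc (Φ p) (Φ pb) ≤ ENNReal.ofReal (ℓ * dist p pb)

/-- `Φ` is Lipschitz upper semicontinuous at `pb`. -/
def LipUscAt {P Y : Type*} [MetricSpace P] [PseudoEMetricSpace Y]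
    (Φ : P → Set Y) (pb : P) : Prop :=
  ∃ ℓ > (0 : ℝ), ∃ δ > (0 : ℝ), LipUscWith Φ pb ℓ δ

/-- The modulus of Lipschitz upper semicontinuity of `Φ` at `pb`. -/
def lipuscMod {P Y : Type*} [MetricSpace P] [PseudoEMetricSpace Y]
    (Φ : P → Set Y) (pb : P) : ℝ :=
  sInf {ℓ : ℝ | 0 < ℓ ∧ ∃ δ > (0 : ℝ), LipUscWith Φ pb ℓ δ}

/-- `Φ` is Lipschitz lower semicontinuous at `(pb, xb)` with constant `ℓ` on `B(pb, δ)`. -/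
def LipLscWith {P X : Type*} [MetricSpace P] [MetricSpace X]
    (Φ : P → Set X) (pb : P) (xb : X) (ℓ δ : ℝ) : Prop :=
  ∀ p ∈ Metric.closedBall pb δ, (Φ p ∩ Metric.closedBall xb (ℓ * dist p pb)).Nonempty

/-- `Φ` is Lipschitz lower semicontinuous at `(pb, xb)`. -/
def LipLscAt {P X : Type*} [MetricSpace P] [MetricSpace X]
    (Φ : P → Set X) (pb : P) (xb : X) : Prop :=
  ∃ ℓ > (0 : ℝ), ∃ δ > (0 : ℝ), LipLscWith Φ pb xb ℓ δ

/-- The modulus of Lipschitz lower semicontinuity of `Φ` at `(pb, xb)`. -/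
def liplscMod {P X : Type*} [MetricSpace P] [MetricSpace X]
    (Φ : P → Set X) (pb : P) (xb : X) : ℝ :=
  sInf {ℓ : ℝ | 0 < ℓ ∧ ∃ δ > (0 : ℝ), LipLscWith Φ pb xb ℓ δ}

/-- `φ` is calm from above at `pb` with constant `ℓ` on `B(pb, δ)`. -/
def CalmFromAboveWith {P : Type*} [MetricSpace P] (φ : P → ℝ≥0∞) (pb : P) (ℓ δ : ℝ) : Prop :=
  ∀ p ∈ Metric.closedBall pb δ, φ p ≤ φ pb + ENNReal.ofReal (ℓ * dist p pb)

/-- The modulus of calmness from above of `φ` at `pb`. -/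
def calmFromAboveMod {P : Type*} [MetricSpace P] (φ : P → ℝ≥0∞) (pb : P) : ℝ :=
  sInf {ℓ : ℝ | 0 < ℓ ∧ ∃ δ > (0 : ℝ), CalmFromAboveWith φ pb ℓ δ}

/-- with `ν₁(p,x) = exc (F(p,x), C) + dist (x, R(p))`, if `ν₁(pb,xb) = 0`,
`F(·,xb)` is Lipschitz u.s.c. at `pb` and `R` is Lipschitz l.s.c. at `(pb,xb)`, then
`p ↦ ν₁(p,xb)` is calm from above at `pb`, with modulus at most
`Lipusc F(·,xb)(pb) + Liplsc R(pb,xb)`. -/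
theorem nu1_calm_from_above {P X Y : Type*} [MetricSpace P]
    [NormedAddCommGroup X] [NormedSpace ℝ X] [CompleteSpace X]
    [NormedAddCommGroup Y] [NormedSpace ℝ Y] [CompleteSpace Y]
    (C : Set Y) (hCclosed : IsClosed C) (hCconv : Convex ℝ C)
    (hCcone : ∀ c ∈ C, ∀ t : ℝ, 0 ≤ t → t • c ∈ C)
    (F : P → X → Set Y) (R : P → Set X)
    (hFne : ∀ p x, (F p x).Nonempty) (hRne : ∀ p, (R p).Nonempty)
    (pb : P) (xb : X)
    (hsol : exc (F pb xb) C + EMetric.infEdist xb (R pb) = 0)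
    (hFusc : LipUscAt (fun p => F p xb) pb)
    (hRlsc : LipLscAt R pb xb) :
    (∃ ℓ > (0 : ℝ), ∃ δ > (0 : ℝ),
      CalmFromAboveWith (fun p => exc (F p xb) C + EMetric.infEdist xb (R p)) pb ℓ δ) ∧
    calmFromAboveMod (fun p => exc (F p xb) C + EMetric.infEdist xb (R p)) pb ≤
      lipuscMod (fun p => F p xb) pb + liplscMod R pb xb := by
  -- From hsol, both terms vanish at (pb, xb)
  obtain ⟨hF0, hR0⟩ := add_eq_zero.mp hsol
  -- Key: any usc constant a and lsc constant b combine to a calmness constant a + b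
  have key : ∀ a b δ1 δ2 : ℝ, 0 < a → 0 < b → 0 < δ1 → 0 < δ2 →
      LipUscWith (fun p => F p xb) pb a δ1 → LipLscWith R pb xb b δ2 →
      CalmFromAboveWith (fun p => exc (F p xb) C + EMetric.infEdist xb (R p)) pb (a + b)
        (min δ1 δ2) := by
    intro a b δ1 δ2 ha hb hδ1 hδ2 hA hB
    intro p hp
    have hd0 : (0:ℝ) ≤ dist p pb := dist_nonneg
    have hp1 : p ∈ Metric.closedBall pb δ1 :=
      Metric.mem_closedBall.2 (le_trans (Metric.mem_closedBall.1 hp) (min_le_left _ _))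
    have hp2 : p ∈ Metric.closedBall pb δ2 :=
      Metric.mem_closedBall.2 (le_trans (Metric.mem_closedBall.1 hp) (min_le_right _ _))
    -- first term
    have h1 : exc (F p xb) C ≤ ENNReal.ofReal (a * dist p pb) := by
      have hsub : ∀ y ∈ F pb xb, EMetric.infEdist y C = 0 := by
        intro y hy
        have : EMetric.infEdist y C ≤ exc (F pb xb) C := le_iSup₂ (f := fun y _ => EMetric.infEdist y C) y hy
        simpa [hF0] using this
      refine iSup₂_le fun y hy => ?_
      have h2 : EMetric.infEdist y C ≤ EMetric.infEdist y (F pb xb) := by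
        refine EMetric.le_infEdist.2 ?_
        intro z hz
        calc EMetric.infEdist y C ≤ edist y z + EMetric.infEdist z C :=
              EMetric.infEdist_le_edist_add_infEdist
          _ = edist y z := by rw [hsub z hz, add_zero]
      calc EMetric.infEdist y C ≤ EMetric.infEdist y (F pb xb) := h2
        _ ≤ exc (F p xb) (F pb xb) := le_iSup₂ (f := fun y _ => EMetric.infEdist y (F pb xb)) y hy
        _ ≤ ENNReal.ofReal (a * dist p pb) := hA p hp1
    -- second term
    have h2 : EMetric.infEdist xb (R p) ≤ ENNReal.ofReal (b * dist p pb) := by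
      obtain ⟨x, hxR, hxB⟩ := hB p hp2
      calc EMetric.infEdist xb (R p) ≤ edist xb x := EMetric.infEdist_le_edist_of_mem hxR
        _ = ENNReal.ofReal (dist xb x) := edist_dist _ _
        _ ≤ ENNReal.ofReal (b * dist p pb) :=
            ENNReal.ofReal_le_ofReal (by simpa [dist_comm] using Metric.mem_closedBall.1 hxB)
    calc exc (F p xb) C + EMetric.infEdist xb (R p)
        ≤ ENNReal.ofReal (a * dist p pb) + ENNReal.ofReal (b * dist p pb) := add_le_add h1 h2
      _ = ENNReal.ofReal ((a + b) * dist p pb) := by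
          rw [← ENNReal.ofReal_add (by positivity) (by positivity)]; ring_nf
      _ ≤ exc (F pb xb) C + EMetric.infEdist xb (R pb) + ENNReal.ofReal ((a + b) * dist p pb) := by
          exact le_add_self
  obtain ⟨a, ha, δ1, hδ1, hA⟩ := hFusc
  obtain ⟨b, hb, δ2, hδ2, hB⟩ := hRlsc
  constructor
  · exact ⟨a + b, by positivity, min δ1 δ2, lt_min hδ1 hδ2,
      key a b δ1 δ2 ha hb hδ1 hδ2 hA hB⟩
  · set S := {ℓ : ℝ | 0 < ℓ ∧ ∃ δ > (0:ℝ),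
      CalmFromAboveWith (fun p => exc (F p xb) C + EMetric.infEdist xb (R p)) pb ℓ δ}
    set A := {ℓ : ℝ | 0 < ℓ ∧ ∃ δ > (0:ℝ), LipUscWith (fun p => F p xb) pb ℓ δ}
    set B := {ℓ : ℝ | 0 < ℓ ∧ ∃ δ > (0:ℝ), LipLscWith R pb xb ℓ δ}
    have hAne : A.Nonempty := ⟨a, ha, δ1, hδ1, hA⟩
    have hBne : B.Nonempty := ⟨b, hb, δ2, hδ2, hB⟩
    have hSbdd : BddBelow S := ⟨0, fun x hx => hx.1.le⟩
    have hAbdd : BddBelow A := ⟨0, fun x hx => hx.1.le⟩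
    have hBbdd : BddBelow B := ⟨0, fun x hx => hx.1.le⟩
    have hmem : ∀ x ∈ A, ∀ y ∈ B, x + y ∈ S := by
      rintro x ⟨hx, d1, hd1, hx'⟩ y ⟨hy, d2, hd2, hy'⟩
      exact ⟨by positivity, min d1 d2, lt_min hd1 hd2,
        key x y d1 d2 hx hy hd1 hd2 hx' hy'⟩
    have h : ∀ x ∈ A, ∀ y ∈ B, sInf S ≤ x + y := fun x hx y hy => csInf_le hSbdd (hmem x hx y hy)
    have h1 : ∀ y ∈ B, sInf S ≤ sInf A + y := by
      intro y hy
      rw [← sub_le_iff_le_add]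
      exact le_csInf hAne fun x hx => sub_le_iff_le_add.2 (by linarith [h x hx y hy])
    rw [← sub_le_iff_le_add']
    exact le_csInf hBne fun y hy => sub_le_iff_le_add'.2 (h1 y hy)

end
end
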